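/- Let L = x(1+16x)²·d²/dx² + (1+16x)²·d/dx − 4. There is a unique formal power series B(x) ∈ ℚ⟦x⟧ with B(0) = 0 and B'(0) = 1 solving the inhomogeneous equation L·B = 1 + 16x, and its coefficients satisfy: for every n ≥ 1, lcm(1,2,...,n)² times the x^n-coefficient of B is an integer. -/

import Mathlib

open PowerSeries

/-- The differential operator `L = x(1+16x)² d²/dx² + (1+16x)² d/dx − 4`
acting on formal power series over `ℚ`. -/
noncomputable def Lop (B : PowerSeries ℚ) : PowerSeries ℚ :=
  PowerSeries.X * (1 + 16 * PowerSeries.X) ^ 2 *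
      PowerSeries.derivativeFun (PowerSeries.derivativeFun B) +
    (1 + 16 * PowerSeries.X) ^ 2 * PowerSeries.derivativeFun B - 4 * B

lemma coeff_derivativeFun' (f : ℚ⟦X⟧) (n : ℕ) :
    coeff n f.derivativeFun = coeff (n+1) f * (n+1) := coeff_derivative f n

lemma derivativeFun_C' (r : ℚ) : (C r).derivativeFun = 0 := derivative_C

lemma Lop_rep (P : ℚ⟦X⟧) : Lop P =
    X * P.derivativeFun.derivativeFun
      + C 32 * (X*(X*P.derivativeFun.derivativeFun))
      + C 256 * (X*(X*(X*P.derivativeFun.derivativeFun)))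
      + P.derivativeFun + C 32 * (X * P.derivativeFun)
      + C 256 * (X*(X*P.derivativeFun)) - C 4 * P := by
  have h32 : (C 32 : ℚ⟦X⟧) = 32 := by simp [map_ofNat]
  have h256 : (C 256 : ℚ⟦X⟧) = 256 := by simp [map_ofNat]
  have h4 : (C 4 : ℚ⟦X⟧) = 4 := by simp [map_ofNat]
  unfold Lop; rw [h32, h256, h4]; ring

lemma coeff_Lop_two (P : ℚ⟦X⟧) (n : ℕ) :
    coeff (n+2) (Lop P) = ((n+3:ℕ):ℚ)^2 * coeff (n+3) P
      + (32*((n+2:ℕ):ℚ)^2 - 4) * coeff (n+2) P + 256*((n+1:ℕ):ℚ)^2 * coeff (n+1) P := by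
  rw [Lop_rep]
  rcases n with _ | m
  · simp only [map_add, map_sub, coeff_C_mul, coeff_succ_X_mul, coeff_derivativeFun',
      coeff_zero_X_mul]
    push_cast; ring
  · simp only [map_add, map_sub, coeff_C_mul, coeff_succ_X_mul, coeff_derivativeFun']
    push_cast; ring

lemma coeff_Lop_zero (P : ℚ⟦X⟧) :
    coeff 0 (Lop P) = coeff 1 P - 4 * coeff 0 P := by
  rw [Lop_rep]
  simp only [map_add, map_sub, coeff_C_mul, coeff_derivativeFun', coeff_zero_X_mul]
  push_cast; ring

lemma coeff_Lop_one (P : ℚ⟦X⟧) :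
    coeff 1 (Lop P) = 4 * coeff 2 P + 28 * coeff 1 P := by
  rw [Lop_rep]
  simp only [map_add, map_sub, coeff_C_mul, coeff_succ_X_mul, coeff_derivativeFun',
    coeff_zero_X_mul]
  push_cast; ring

noncomputable def Wq : ℚ⟦X⟧ := mk fun n => (-16)^n
noncomputable def Tq : ℚ⟦X⟧ := X * Wq

lemma hUW : ((1:ℚ⟦X⟧) + 16 * X) * Wq = 1 := by
  have h16 : (16:ℚ⟦X⟧) = C 16 := by simp [map_ofNat]
  ext n
  rcases n with _ | n
  · simp [Wq, h16, add_mul, coeff_zero_X_mul, mul_assoc]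
  · simp [Wq, h16, add_mul, mul_assoc, coeff_succ_X_mul, coeff_C_mul, coeff_mk, pow_succ]
    ring

lemma dW : Wq.derivativeFun = C (-16) * Wq^2 := by
  ext n
  rw [coeff_derivativeFun', coeff_C_mul, pow_two, coeff_mul]
  simp only [Wq, coeff_mk]
  rw [Finset.sum_congr rfl (fun x hx => by
    rw [← pow_add, (Finset.HasAntidiagonal.mem_antidiagonal.mp hx)])]
  rw [Finset.sum_const, Finset.Nat.card_antidiagonal]
  push_cast
  rw [pow_succ]
  ring

lemma dC_mul (a : ℚ) (f : ℚ⟦X⟧) :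
    (C a * f).derivativeFun = C a * f.derivativeFun := by
  rw [derivativeFun_mul, derivativeFun_C', smul_eq_mul, smul_eq_mul, mul_zero, add_zero]

lemma dX : (X : ℚ⟦X⟧).derivativeFun = 1 := by
  ext n
  rw [coeff_derivativeFun']
  rcases n with _ | n <;> simp [coeff_X]

lemma dT : Tq.derivativeFun = Wq^2 := by
  rw [Tq, derivativeFun_mul, dX, dW, smul_eq_mul, smul_eq_mul, map_neg, map_ofNat]
  -- X * (C (-16) * Wq^2) + Wq * 1 = Wq^2
  -- i.e. Wq*(1 - 16*X*Wq) = Wq * Wq modulo hUW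
  linear_combination (-Wq) * hUW

lemma dTpow (m : ℕ) : (Tq^(m+1)).derivativeFun = C ((m:ℚ)+1) * (Tq^m * Wq^2) := by
  induction m with
  | zero => simp [dT]
  | succ m ih =>
      have : Tq^(m+2) = Tq^(m+1) * Tq := by ring
      rw [this, derivativeFun_mul, ih, dT, smul_eq_mul, smul_eq_mul]
      simp only [Nat.cast_add, Nat.cast_one, map_add, map_one]
      ring

lemma hTq : Tq = X * Wq := rfl

lemma h1 : Wq * Wq * ((1:ℚ⟦X⟧)+16*X)^2 = 1 := by
  linear_combination (((1:ℚ⟦X⟧)+16*X)*Wq + 1) * hUW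

lemma hW2 : (Wq^2).derivativeFun = C (-32) * Wq^3 := by
  rw [pow_two, derivativeFun_mul, dW]
  simp only [smul_eq_mul, map_neg, map_ofNat]
  ring

lemma LopT1 : Lop Tq = 1 - C 36 * Tq := by
  unfold Lop
  rw [dT, hW2, hTq]
  simp only [map_neg, map_ofNat]
  linear_combination ((1:ℚ⟦X⟧) - 32*X*Wq) * h1

lemma LopTpow (m : ℕ) : Lop (Tq^(m+2)) =
    C (((m:ℚ)+2)^2) * Tq^(m+1) - C (4*(2*(m:ℚ)+5)^2) * Tq^(m+2) := by
  have hD1 := dTpow (m+1)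
  push_cast at hD1
  have hD2 : ((Tq^(m+2)).derivativeFun).derivativeFun
      = C ((m:ℚ)+1+1) * ((Tq^(m+1)) * (C (-32) * Wq^3)
          + Wq^2 * (C ((m:ℚ)+1) * (Tq^m * Wq^2))) := by
    rw [hD1, dC_mul, derivativeFun_mul, hW2, dTpow m, smul_eq_mul, smul_eq_mul]
  unfold Lop
  rw [hD2, hD1, hTq]
  simp only [map_neg, map_ofNat, map_add, map_mul, map_one, map_pow]
  linear_combination
    ((C (m:ℚ) + 2) * X^(m+1) * Wq^(m+1) * ((C (m:ℚ) + 1) * Wq - 32*X*Wq + 1)) * h1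
    + ((C (m:ℚ) + 2) * (C (m:ℚ) + 1) * X^(m+1) * Wq^(m+1)) * hUW

lemma LopTgen (m : ℕ) : Lop (Tq^(m+1)) =
    C (((m:ℚ)+1)^2) * Tq^m - C (4*(2*(m:ℚ)+3)^2) * Tq^(m+1) := by
  rcases m with _ | m
  · rw [pow_one, LopT1]
    norm_num
  · have h := LopTpow m
    rw [h]
    push_cast
    ring_nf

noncomputable def cseq (m : ℕ) : ℚ :=
  ((2*m).choose m : ℚ)^2 *
    ∑ k ∈ Finset.Icc 1 m, (16:ℚ)^(k-1) / (((k * (2*k).choose k : ℕ)):ℚ)^2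

lemma cseq_zero : cseq 0 = 0 := by simp [cseq]

lemma cseq_one : cseq 1 = 1 := by
  simp [cseq]

lemma crec (m : ℕ) : ((m:ℚ)+1)^2 * cseq (m+1) = 4*(2*(m:ℚ)+1)^2 * cseq m + 16^m := by
  have hA0 : (((2*m).choose m : ℕ):ℚ) ≠ 0 :=
    Nat.cast_ne_zero.mpr (Nat.choose_pos (by omega)).ne'
  have hA1 : (((2*(m+1)).choose (m+1) : ℕ):ℚ) ≠ 0 :=
    Nat.cast_ne_zero.mpr (Nat.choose_pos (by omega)).ne'
  have hratio : ((m:ℚ)+1) * ((2*(m+1)).choose (m+1) : ℚ)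
      = 2*(2*(m:ℚ)+1) * ((2*m).choose m :ℚ) := by
    have h := Nat.succ_mul_centralBinom_succ m
    have h2 : Nat.centralBinom (m+1) = (2*(m+1)).choose (m+1) := rfl
    have h3 : Nat.centralBinom m = (2*m).choose m := rfl
    rw [h2, h3] at h
    exact_mod_cast congrArg (Nat.cast (R := ℚ)) h
  have hd : ((m:ℚ)+1) * ((2*(m+1)).choose (m+1) : ℚ) ≠ 0 := by
    apply mul_ne_zero _ hA1
    positivity
  unfold cseq
  rw [Finset.sum_Icc_succ_top (by omega : 1 ≤ m+1)]
  have hidx : (m+1) - 1 = m := by omega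
  rw [hidx]
  have hcast : (((m+1) * (2*(m+1)).choose (m+1) : ℕ):ℚ)
      = ((m:ℚ)+1) * ((2*(m+1)).choose (m+1):ℚ) := by push_cast; ring
  rw [hcast]
  set S := ∑ k ∈ Finset.Icc 1 m, (16:ℚ)^(k-1) / (((k * (2*k).choose k : ℕ)):ℚ)^2 with hS
  calc ((m:ℚ)+1)^2 * (((2*(m+1)).choose (m+1) : ℚ)^2
          * (S + (16:ℚ)^m / (((m:ℚ)+1) * ((2*(m+1)).choose (m+1):ℚ))^2))
      = (((m:ℚ)+1) * ((2*(m+1)).choose (m+1) : ℚ))^2 * S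
        + ((((m:ℚ)+1) * ((2*(m+1)).choose (m+1) : ℚ))^2
            * ((16:ℚ)^m / (((m:ℚ)+1) * ((2*(m+1)).choose (m+1):ℚ))^2)) := by ring
    _ = (2*(2*(m:ℚ)+1) * ((2*m).choose m :ℚ))^2 * S + (16:ℚ)^m := by
        rw [hratio]
        have hkey : ∀ (a b : ℚ), a ≠ 0 → a * (b / a) = b := fun a b ha => by
          field_simp
        rw [hkey _ _ (pow_ne_zero 2 (hratio ▸ hd))]
    _ = 4*(2*(m:ℚ)+1)^2 * (((2*m).choose m : ℚ)^2 * S) + 16^m := by ring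

noncomputable def Sq (N : ℕ) : ℚ⟦X⟧ :=
  ∑ m ∈ Finset.range N, C (cseq (m+1)) * Tq^(m+1)

lemma dzero : (0:ℚ⟦X⟧).derivativeFun = 0 := by
  ext n
  simp [coeff_derivativeFun']

lemma Lop_add (P Q : ℚ⟦X⟧) : Lop (P+Q) = Lop P + Lop Q := by
  unfold Lop
  simp only [derivativeFun_add]
  ring

lemma Lop_Cmul (a : ℚ) (P : ℚ⟦X⟧) : Lop (C a * P) = C a * Lop P := by
  unfold Lop
  rw [dC_mul, dC_mul]
  ring

lemma LopS (N : ℕ) : Lop (Sq N) = 1 + 16*X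
    - (C ((16:ℚ)^N) * (1+16*X) + C (4*(2*(N:ℚ)+1)^2 * cseq N)) * Tq^N := by
  induction N with
  | zero =>
      have h0 : Sq 0 = 0 := by simp [Sq]
      rw [h0]
      have hL0 : Lop 0 = 0 := by
        unfold Lop; rw [dzero, dzero]; ring
      rw [hL0, cseq_zero]
      simp
  | succ N ih =>
      have hstep : Sq (N+1) = Sq N + C (cseq (N+1)) * Tq^(N+1) :=
        Finset.sum_range_succ _ N
      rw [hstep, Lop_add, Lop_Cmul, LopTgen N, ih]
      have hcrecC := congrArg (C (R := ℚ)) (crec N)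
      simp only [map_add, map_mul, map_pow, map_one, map_ofNat] at hcrecC
      rw [hTq]
      push_cast
      simp only [map_add, map_mul, map_pow, map_one, map_ofNat]
      linear_combination ((X*Wq)^N) * hcrecC
        + ((16:ℚ⟦X⟧)^(N+1) * X * (X*Wq)^N) * hUW

lemma X_dvd_Tq : (X:ℚ⟦X⟧) ∣ Tq := ⟨Wq, hTq⟩

lemma coeff_Tpow_zero {n m : ℕ} (h : n < m) : coeff n (Tq^m) = 0 :=
  (X_pow_dvd_iff.mp (pow_dvd_pow_of_dvd X_dvd_Tq m)) n h

lemma coeff_junk {n N : ℕ} (h : n < N) (A : ℚ⟦X⟧) : coeff n (A * Tq^N) = 0 :=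
  (X_pow_dvd_iff.mp ((pow_dvd_pow_of_dvd X_dvd_Tq N).mul_left A)) n h

noncomputable def bq (n : ℕ) : ℚ := coeff n (Sq n)
noncomputable def Bq : ℚ⟦X⟧ := mk bq

lemma coeff_Bq (n N : ℕ) (h : n ≤ N) : coeff n Bq = coeff n (Sq N) := by
  have hmk : coeff n Bq = coeff n (Sq n) := by
    rw [Bq, coeff_mk, bq]
  rw [hmk]
  clear hmk
  induction N, h using Nat.le_induction with
  | base => rfl
  | succ N hN ih =>
      rw [show Sq (N+1) = Sq N + C (cseq (N+1)) * Tq^(N+1) from Finset.sum_range_succ _ N,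
        map_add, coeff_junk (by omega) (C (cseq (N+1))), add_zero, ih]

lemma coeff_Bq0 : coeff 0 Bq = 0 := by
  rw [coeff_Bq 0 0 (le_refl 0)]
  simp [Sq]

lemma coeff_Bq1 : coeff 1 Bq = 1 := by
  rw [coeff_Bq 1 1 (le_refl 1), Sq, Finset.sum_range_one, cseq_one, map_one, one_mul,
    pow_one, hTq, coeff_succ_X_mul]
  simp [Wq]

lemma LopBq : Lop Bq = 1 + 16 * X := by
  ext n
  rcases n with _ | n
  · rw [coeff_Lop_zero, coeff_Bq 1 1 (by omega), coeff_Bq 0 1 (by omega),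
      ← coeff_Lop_zero (Sq 1), LopS 1, map_sub, coeff_junk (by omega), sub_zero]
  rcases n with _ | n
  · rw [coeff_Lop_one, coeff_Bq 2 2 (by omega), coeff_Bq 1 2 (by omega),
      ← coeff_Lop_one (Sq 2), LopS 2, map_sub, coeff_junk (by omega), sub_zero]
  · rw [coeff_Lop_two, coeff_Bq (n+3) (n+3) (by omega), coeff_Bq (n+2) (n+3) (by omega),
      coeff_Bq (n+1) (n+3) (by omega),
      ← coeff_Lop_two (Sq (n+3)) n, LopS (n+3), map_sub, coeff_junk (by omega), sub_zero]

lemma eq_Bq (B : ℚ⟦X⟧) (h0 : coeff 0 B = 0) (h1 : coeff 1 B = 1)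
    (hL : Lop B = 1 + 16 * X) : B = Bq := by
  ext n
  induction n using Nat.strong_induction_on with
  | _ n ih =>
      match n with
      | 0 => rw [h0, coeff_Bq0]
      | 1 => rw [h1, coeff_Bq1]
      | 2 =>
          have e1 := coeff_Lop_one B
          rw [hL] at e1
          have e2 := coeff_Lop_one Bq
          rw [LopBq] at e2
          rw [h1] at e1
          rw [coeff_Bq1] at e2
          have : (4:ℚ) * coeff 2 B = 4 * coeff 2 Bq := by linarith
          linarith
      | (n+3) =>
          have e1 := coeff_Lop_two B n
          rw [hL] at e1
          have e2 := coeff_Lop_two Bq n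
          rw [LopBq] at e2
          rw [ih (n+1) (by omega), ih (n+2) (by omega)] at e1
          have h9 : (((n+3:ℕ)):ℚ)^2 ≠ 0 := by positivity
          have heq : (((n+3:ℕ)):ℚ)^2 * coeff (n+3) B
              = (((n+3:ℕ)):ℚ)^2 * coeff (n+3) Bq := by linarith
          exact mul_left_cancel₀ h9 heq


lemma fact_choose_eq_card {p k b : ℕ} (hp : p.Prime) (hk : 1 ≤ k) (hb : Nat.log p (2*k) < b) :
    ((2*k).choose k).factorization p
      = ((Finset.Ico 1 b).filter (fun i => p ^ i ≤ 2 * (k % p ^ i))).card := by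
  haveI : Fact p.Prime := ⟨hp⟩
  have hkn : k ≤ 2*k := by omega
  have hpos : 0 < (2*k).choose k := Nat.choose_pos hkn
  have h1 : (((2*k).choose k).factorization p : ℕ∞) = _ :=
    (Nat.factorization_def _ hp) ▸ padicValNat_eq_emultiplicity hpos.ne'
  rw [Nat.Prime.emultiplicity_choose hp hkn hb] at h1
  have h2 : ∀ i : ℕ, (k % p ^ i + (2*k - k) % p ^ i) = 2 * (k % p ^ i) := by
    intro i
    rw [show 2*k - k = k from by omega]
    omega
  simp only [h2] at h1
  exact_mod_cast h1

lemma carry_notmem_le_val {p k i : ℕ} (hp : p.Prime) (hk : 1 ≤ k)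
    (hi : i ≤ k.factorization p) : ¬ (p ^ i ≤ 2 * (k % p ^ i)) := by
  have : p ^ i ∣ k := dvd_trans (pow_dvd_pow p hi) (Nat.ordProj_dvd k p)
  rw [Nat.mod_eq_zero_of_dvd this]
  have := pow_pos hp.pos i
  omega

lemma key_dvd {n m k : ℕ} (hk : 1 ≤ k) (hkm : k ≤ m) (hmn : m ≤ n) :
    (k * (2*k).choose k) ∣ ((Finset.Icc 1 n).lcm id * 4^(k-1) * (2*m).choose m) := by
  have hm1 : 1 ≤ m := le_trans hk hkm
  have hn1 : 1 ≤ n := le_trans hm1 hmn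
  have hk0 : k ≠ 0 := by omega
  have hL0 : (Finset.Icc 1 n).lcm id ≠ 0 := by
    simp only [ne_eq, Finset.lcm_eq_zero_iff, Set.mem_image, Finset.mem_coe, Finset.mem_Icc]
    rintro ⟨x, ⟨hx1, hx2⟩, hx0⟩
    simp only [id_eq] at hx0
    omega
  have hc2k : (2*k).choose k ≠ 0 := (Nat.choose_pos (by omega)).ne'
  have hc2m : (2*m).choose m ≠ 0 := (Nat.choose_pos (by omega)).ne'
  have h40 : (4:ℕ)^(k-1) ≠ 0 := by positivity
  rw [← Nat.factorization_le_iff_dvd (mul_ne_zero hk0 hc2k)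
    (mul_ne_zero (mul_ne_zero hL0 h40) hc2m)]
  rw [Finsupp.le_def]
  intro p
  by_cases hp : p.Prime
  swap
  · simp [Nat.factorization_eq_zero_of_not_prime _ hp]
  rw [Nat.factorization_mul hk0 hc2k, Nat.factorization_mul (mul_ne_zero hL0 h40) hc2m,
    Nat.factorization_mul hL0 h40]
  simp only [Finsupp.coe_add, Pi.add_apply]
  -- abbreviations
  have hkdvd : k ∣ (Finset.Icc 1 n).lcm id := Finset.dvd_lcm (by simp [Finset.mem_Icc]; omega)
  have hvk_le : k.factorization p ≤ ((Finset.Icc 1 n).lcm id).factorization p :=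
    Finsupp.le_def.mp ((Nat.factorization_le_iff_dvd hk0 hL0).mpr hkdvd) p
  have hLlog : Nat.log p n ≤ ((Finset.Icc 1 n).lcm id).factorization p := by
    refine (Nat.Prime.pow_dvd_iff_le_factorization hp hL0).mp (Finset.dvd_lcm ?_)
    simp only [Finset.mem_Icc]
    exact ⟨Nat.one_le_iff_ne_zero.mpr (pow_ne_zero _ hp.pos.ne'), Nat.pow_log_le_self p (by omega)⟩
  by_cases hp2 : p = 2
  · subst hp2
    have h1 : ((2*k).choose k).factorization 2 ≤ Nat.log 2 (2*k) :=
      Nat.factorization_choose_le_log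
    have h2 : Nat.log 2 (2*k) = Nat.log 2 k + 1 := by
      rw [mul_comm]; exact Nat.log_mul_base one_lt_two hk0
    have h3 : Nat.log 2 k < k := Nat.log_lt_self 2 hk0
    have h4 : ((4:ℕ)^(k-1)).factorization 2 = 2*(k-1) := by
      rw [show (4:ℕ) = 2^2 from rfl, ← pow_mul, Nat.Prime.factorization_pow Nat.prime_two]
      simp [mul_comm]
    have h5 : 1 ≤ ((2*m).choose m).factorization 2 := by
      refine (Nat.Prime.pow_dvd_iff_le_factorization Nat.prime_two hc2m).mp ?_
      rw [pow_one]
      exact Nat.two_dvd_centralBinom_of_one_le hm1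
    omega
  · have hp3 : 3 ≤ p := by have := hp.two_le; omega
    set L := Nat.log p n with hLdef
    have hnp : n < p^(L+1) := Nat.lt_pow_succ_log_self hp.one_lt n
    have h2n : 2*n < p^(L+2) := by
      calc 2*n < 2*p^(L+1) := by omega
        _ ≤ p*p^(L+1) := Nat.mul_le_mul_right _ (by omega)
        _ = p^(L+2) := by ring
    have hlogk : Nat.log p (2*k) < L+2 := Nat.log_lt_of_lt_pow (by omega) (by omega)
    have hlogm : Nat.log p (2*m) < L+2 := Nat.log_lt_of_lt_pow (by omega) (by omega)
    have haL : k.factorization p ≤ L := by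
      calc k.factorization p ≤ Nat.log p k := by
            refine (Nat.le_log_iff_pow_le hp.one_lt hk0).mpr ?_
            exact Nat.le_of_dvd (by omega) (Nat.ordProj_dvd k p)
        _ ≤ L := Nat.log_mono_right (le_trans hkm hmn)
    rw [fact_choose_eq_card hp hk hlogk]
    have hFsub : ∀ b : ℕ, ((Finset.Ico 1 b).filter (fun i => p ^ i ≤ 2 * (k % p ^ i)))
        ⊆ Finset.Ico (k.factorization p + 1) b := by
      intro b i hi
      rw [Finset.mem_filter, Finset.mem_Ico] at hi
      rw [Finset.mem_Ico]
      refine ⟨?_, hi.1.2⟩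
      by_contra hcon
      exact carry_notmem_le_val hp hk (by omega) hi.2
    by_cases hcase : 2*k < p^(L+1)
    · have hsub2 : ((Finset.Ico 1 (L+2)).filter (fun i => p ^ i ≤ 2 * (k % p ^ i)))
          ⊆ Finset.Ico (k.factorization p + 1) (L+1) := by
        intro i hi
        have h8 := hFsub (L+2) hi
        rw [Finset.mem_filter] at hi
        rw [Finset.mem_Ico] at h8 ⊢
        refine ⟨h8.1, ?_⟩
        have : p^i < p^(L+1) := by
          calc p^i ≤ 2*(k % p^i) := hi.2
            _ ≤ 2*k := by have := Nat.mod_le k (p^i); omega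
            _ < p^(L+1) := hcase
        have := (Nat.pow_lt_pow_iff_right hp.one_lt).mp this
        omega
      have hcard := Finset.card_le_card hsub2
      rw [Nat.card_Ico] at hcard
      omega
    · have hcard := Finset.card_le_card (hFsub (L+2))
      rw [Nat.card_Ico] at hcard
      have hmlt : m < p^(L+1) := by omega
      have hvm : 1 ≤ ((2*m).choose m).factorization p := by
        rw [fact_choose_eq_card hp hm1 hlogm]
        refine Finset.card_pos.mpr ⟨L+1, ?_⟩
        rw [Finset.mem_filter, Finset.mem_Ico]
        refine ⟨⟨by omega, by omega⟩, ?_⟩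
        rw [Nat.mod_eq_of_lt hmlt]
        omega
      omega


lemma cseq_int (n m : ℕ) (hm : 1 ≤ m) (hmn : m ≤ n) :
    ∃ z : ℤ, (((Finset.Icc 1 n).lcm id : ℕ) : ℚ)^2 * cseq m = z := by
  refine ⟨((∑ k ∈ Finset.Icc 1 m,
    (((Finset.Icc 1 n).lcm id * 4^(k-1) * (2*m).choose m) / (k*(2*k).choose k))^2 : ℕ) : ℤ), ?_⟩
  have hcast : (((((∑ k ∈ Finset.Icc 1 m,
      (((Finset.Icc 1 n).lcm id * 4^(k-1) * (2*m).choose m) / (k*(2*k).choose k))^2 : ℕ)) : ℤ)) : ℚ)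
      = ∑ k ∈ Finset.Icc 1 m,
      ((((Finset.Icc 1 n).lcm id * 4^(k-1) * (2*m).choose m) / (k*(2*k).choose k) : ℕ) : ℚ)^2 := by
    rw [Int.cast_natCast]
    push_cast
    rfl
  rw [hcast, cseq, Finset.mul_sum, Finset.mul_sum]
  refine Finset.sum_congr rfl ?_
  intro k hk
  rw [Finset.mem_Icc] at hk
  have hdvd := key_dvd hk.1 hk.2 hmn
  have hchoose : 0 < (2*k).choose k := Nat.choose_pos (by omega)
  have hne : ((k*(2*k).choose k : ℕ):ℚ) ≠ 0 := by
    have hpos : 0 < k*(2*k).choose k := Nat.mul_pos (by omega) hchoose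
    exact_mod_cast hpos.ne'
  have hq : ((((Finset.Icc 1 n).lcm id * 4^(k-1) * (2*m).choose m) / (k*(2*k).choose k) : ℕ) : ℚ)
      = (((Finset.Icc 1 n).lcm id * 4^(k-1) * (2*m).choose m : ℕ):ℚ)
        / ((k*(2*k).choose k : ℕ):ℚ) := Nat.cast_div hdvd hne
  have h16 : (16:ℚ)^(k-1) = ((4:ℚ)^(k-1))^2 := by
    rw [← pow_mul, mul_comm, pow_mul]
    norm_num
  rw [hq, div_pow]
  push_cast
  rw [h16]
  field_simp

lemma T_int (n m : ℕ) : ∃ z : ℤ, coeff n (Tq^m) = (z : ℚ) := by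
  refine ⟨PowerSeries.coeff n ((X * PowerSeries.mk (fun j => ((-16)^j : ℤ)))^m), ?_⟩
  have hW : Wq = PowerSeries.map (Int.castRingHom ℚ)
      (PowerSeries.mk (fun j => ((-16)^j : ℤ))) := by
    ext j
    rw [coeff_map, coeff_mk]
    simp [Wq]
  rw [hTq, hW, show (X:ℚ⟦X⟧) = PowerSeries.map (Int.castRingHom ℚ) X from (map_X _).symm,
    ← map_mul, ← map_pow, coeff_map]
  simp


/-- **Existence, uniqueness and denominator bound for the solution of
`L·B = 1 + 16x`:** there is a unique `B ∈ ℚ⟦x⟧` with `B(0) = 0`, `B'(0) = 1`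
and `L·B = 1 + 16x`, and its coefficients satisfy
`lcm(1,…,n)² · bₙ ∈ ℤ` for every `n ≥ 1`. -/
theorem stmt_14 :
    (∃! B : PowerSeries ℚ,
      PowerSeries.coeff 0 B = 0 ∧ PowerSeries.coeff 1 B = 1 ∧
        Lop B = 1 + 16 * PowerSeries.X) ∧
    ∀ B : PowerSeries ℚ,
      (PowerSeries.coeff 0 B = 0 ∧ PowerSeries.coeff 1 B = 1 ∧
        Lop B = 1 + 16 * PowerSeries.X) →
      ∀ n : ℕ, 1 ≤ n → ∃ z : ℤ,
        (((Finset.Icc 1 n).lcm id : ℕ) : ℚ) ^ 2 * PowerSeries.coeff n B = z := by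
  constructor
  · exact ⟨Bq, ⟨coeff_Bq0, coeff_Bq1, LopBq⟩, fun y hy => eq_Bq y hy.1 hy.2.1 hy.2.2⟩
  · intro B hB n hn
    rw [eq_Bq B hB.1 hB.2.1 hB.2.2]
    rw [show coeff n Bq = coeff n (Sq n) from coeff_Bq n n le_rfl]
    rw [Sq, map_sum]
    simp only [coeff_C_mul]
    have hint : ∀ m ∈ Finset.range n, ∃ z : ℤ,
        (((Finset.Icc 1 n).lcm id : ℕ) : ℚ)^2 * (cseq (m+1) * coeff n (Tq^(m+1))) = z := by
      intro m hm
      rw [Finset.mem_range] at hm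
      obtain ⟨z1, hz1⟩ := cseq_int n (m+1) (by omega) (by omega)
      obtain ⟨z2, hz2⟩ := T_int n (m+1)
      refine ⟨z1*z2, ?_⟩
      push_cast
      rw [← hz1, hz2]
      ring
    choose g hg using hint
    refine ⟨∑ m ∈ (Finset.range n).attach, g m.1 m.2, ?_⟩
    rw [Finset.mul_sum,
      ← Finset.sum_attach (Finset.range n)
        (fun m => (((Finset.Icc 1 n).lcm id : ℕ) : ℚ)^2 * (cseq (m+1) * coeff n (Tq^(m+1))))]
    push_cast
    exact Finset.sum_congr rfl (fun i _ => hg i.1 i.2)
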